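/- Let F : (0,∞) → (0,∞) be continuous, strictly increasing with lim_{t→∞} F(t) = ∞, slowly varying, and satisfy lim_{t→∞} F(t)/√(log t) = ∞. Let U : ℝ² → (0,∞) be measurable, Lebesgue integrable, and satisfy lim_{|x|→∞} F(1/U(x))/|x| = 1. Then for every ℓ > 0 the Gaussian convolution |φ₀|² * U satisfies lim_{|x|→∞} F(1/(|φ₀|² * U)(x))/|x| = 1. -/

import Mathlib

open MeasureTheory Filter Real

noncomputable section

abbrev E2 := EuclideanSpace ℝ (Fin 2)

/-- The centred Gaussian probability density `|φ₀(x)|² = (2πℓ²)⁻¹ exp(-|x|²/(2ℓ²))` on `ℝ²`. -/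
def phiSq (l : ℝ) (x : E2) : ℝ := (2 * π * l ^ 2)⁻¹ * Real.exp (-‖x‖ ^ 2 / (2 * l ^ 2))

/-- The Gaussian convolution `(|φ₀|² * U)(x) = ∫ |φ₀(y)|² U(x-y) dy`. -/
def gaussConv (l : ℝ) (U : E2 → ℝ) (x : E2) : ℝ := ∫ y : E2, phiSq l y * U (x - y)


/-- Inverse of `F`, selected on `[2, ∞)`. -/
def Ginv (F : ℝ → ℝ) (s : ℝ) : ℝ := Function.invFunOn F (Set.Ici 2) s

section G
variable {F : ℝ → ℝ}
  (hFcont : ContinuousOn F (Set.Ioi 0))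
  (hFmono : StrictMonoOn F (Set.Ioi 0))
  (hFtop : Tendsto F atTop atTop)
include hFcont hFmono hFtop

lemma G_exists (s : ℝ) (hs : F 2 ≤ s) : ∃ t ∈ Set.Ici (2:ℝ), F t = s := by
  obtain ⟨T, hT1, hT2⟩ := ((hFtop.eventually_ge_atTop s).and (eventually_ge_atTop 2)).exists
  have hsub : Set.Icc (2:ℝ) T ⊆ Set.Ioi 0 := fun t ht => lt_of_lt_of_le two_pos ht.1
  have := intermediate_value_Icc (hT2 : (2:ℝ) ≤ T) (hFcont.mono hsub)
  obtain ⟨t, ht, hFt⟩ := this ⟨hs, hT1⟩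
  exact ⟨t, ht.1, hFt⟩

lemma G_mem {s : ℝ} (hs : F 2 ≤ s) : Ginv F s ∈ Set.Ici (2:ℝ) :=
  Function.invFunOn_mem (G_exists hFcont hFmono hFtop s hs)

lemma G_eq {s : ℝ} (hs : F 2 ≤ s) : F (Ginv F s) = s :=
  Function.invFunOn_eq (G_exists hFcont hFmono hFtop s hs)

lemma G_pos {s : ℝ} (hs : F 2 ≤ s) : 0 < Ginv F s :=
  lt_of_lt_of_le two_pos (G_mem hFcont hFmono hFtop hs)

lemma le_G {t s : ℝ} (ht : 0 < t) (hs : F 2 ≤ s) (h : F t ≤ s) : t ≤ Ginv F s := by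
  by_contra hlt
  push_neg at hlt
  have := hFmono (Set.mem_Ioi.2 (G_pos hFcont hFmono hFtop hs)) (Set.mem_Ioi.2 ht) hlt
  rw [G_eq hFcont hFmono hFtop hs] at this
  exact absurd h (not_le.2 this)

lemma G_le {t s : ℝ} (ht : 0 < t) (hs : F 2 ≤ s) (h : s ≤ F t) : Ginv F s ≤ t := by
  by_contra hlt
  push_neg at hlt
  have := hFmono (Set.mem_Ioi.2 ht) (Set.mem_Ioi.2 (G_pos hFcont hFmono hFtop hs)) hlt
  rw [G_eq hFcont hFmono hFtop hs] at this
  exact absurd h (not_le.2 this)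

lemma G_mono {s s' : ℝ} (hs : F 2 ≤ s) (h : s ≤ s') : Ginv F s ≤ Ginv F s' := by
  refine G_le hFcont hFmono hFtop (G_pos hFcont hFmono hFtop (hs.trans h)) hs ?_
  rw [G_eq hFcont hFmono hFtop (hs.trans h)]
  exact h

lemma G_tendsto : Tendsto (Ginv F) atTop atTop := by
  rw [tendsto_atTop]
  intro M
  filter_upwards [eventually_ge_atTop (F 2), eventually_ge_atTop (F (max M 2))] with s h1 h2
  calc M ≤ max M 2 := le_max_left _ _
    _ ≤ Ginv F s := le_G hFcont hFmono hFtop (lt_of_lt_of_le two_pos (le_max_right _ _)) h1 h2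

lemma G_subgauss (hFsub : Tendsto (fun t : ℝ => F t / Real.sqrt (Real.log t)) atTop atTop)
    {b : ℝ} (hb : 0 < b) : ∀ᶠ s in atTop, Ginv F s ≤ Real.exp (b * s ^ 2) := by
  set K : ℝ := 1 / Real.sqrt b + 1 with hK
  have hKpos : 0 < K := by positivity
  have hKsq : 1 / K ^ 2 ≤ b := by
    have h1 : 1 / Real.sqrt b ≤ K := le_add_of_nonneg_right zero_le_one
    have h2 : (1 / Real.sqrt b) ^ 2 ≤ K ^ 2 := pow_le_pow_left₀ (by positivity) h1 2
    have h3 : (1 / Real.sqrt b) ^ 2 = 1 / b := by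
      rw [div_pow, one_pow, sq_sqrt hb.le]
    rw [div_le_iff₀ (by positivity)]
    rw [h3] at h2
    rw [div_le_iff₀ hb] at h2
    nlinarith [h2]
  obtain ⟨T₀, hT₀⟩ := (hFsub.eventually_ge_atTop K).exists_forall_of_atTop
  filter_upwards [eventually_ge_atTop (F 2), eventually_ge_atTop (F (max T₀ 2)),
    eventually_ge_atTop (0:ℝ)] with s h1 h2 h0
  have hGpos := G_pos hFcont hFmono hFtop h1
  have hGT : max T₀ 2 ≤ Ginv F s :=
    le_G hFcont hFmono hFtop (lt_of_lt_of_le two_pos (le_max_right _ _)) h1 h2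
  have hlog : 0 ≤ Real.log (Ginv F s) :=
    Real.log_nonneg (le_trans (by norm_num) ((le_max_right T₀ 2).trans hGT))
  have hdiv : K ≤ F (Ginv F s) / Real.sqrt (Real.log (Ginv F s)) :=
    hT₀ _ ((le_max_left T₀ 2).trans hGT)
  rw [G_eq hFcont hFmono hFtop h1] at hdiv
  have hsqrt : Real.sqrt (Real.log (Ginv F s)) ≤ s / K := by
    rcases eq_or_lt_of_le (Real.sqrt_nonneg (Real.log (Ginv F s))) with h | h
    · rw [← h]; positivity
    · rw [le_div_iff₀ h] at hdiv
      rw [le_div_iff₀ hKpos]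
      nlinarith [hdiv]
  have hlog2 : Real.log (Ginv F s) ≤ b * s ^ 2 := by
    have h3 : Real.log (Ginv F s) ≤ (s / K) ^ 2 := by
      rw [← Real.sq_sqrt hlog]
      exact pow_le_pow_left₀ (Real.sqrt_nonneg _) hsqrt 2
    calc Real.log (Ginv F s) ≤ (s / K) ^ 2 := h3
      _ = s ^ 2 / K ^ 2 := div_pow s K 2
      _ = s ^ 2 * (1 / K ^ 2) := (mul_one_div _ _).symm
      _ ≤ s ^ 2 * b := mul_le_mul_of_nonneg_left hKsq (sq_nonneg s)
      _ = b * s ^ 2 := mul_comm _ _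
  rw [← Real.log_le_iff_le_exp hGpos]
  exact hlog2

lemma G_slow (hFslow : ∀ c > 0, Tendsto (fun t : ℝ => F (c * t) / F t) atTop (nhds 1))
    {c : ℝ} (hc : 0 < c) : Tendsto (fun s => F (c * Ginv F s) / s) atTop (nhds 1) := by
  have h1 := (hFslow c hc).comp (G_tendsto hFcont hFmono hFtop)
  refine h1.congr' ?_
  filter_upwards [eventually_ge_atTop (F 2)] with s hs
  simp only [Function.comp_apply, G_eq hFcont hFmono hFtop hs]

end G

lemma ev_norm_iff {p : E2 → Prop} :
    (∀ᶠ x in comap (fun x : E2 => ‖x‖) atTop, p x) ↔ ∃ R, ∀ x : E2, R ≤ ‖x‖ → p x := by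
  rw [eventually_comap]
  constructor
  · intro h
    rcases eventually_atTop.1 h with ⟨R, hR⟩
    exact ⟨R, fun x hx => hR ‖x‖ hx x rfl⟩
  · rintro ⟨R, hR⟩
    exact eventually_atTop.2 ⟨R, fun b hb x hx => hR x (hx ▸ hb)⟩

lemma gauss_int {b : ℝ} (hb : 0 < b) : Integrable (fun v : E2 => Real.exp (-b * ‖v‖ ^ 2)) := by
  have h := GaussianFourier.integrable_cexp_neg_mul_sq_norm_add (V := E2) (b := (b:ℂ))
    (by simpa) 0 0
  refine h.norm.congr (Eventually.of_forall fun v => ?_)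
  simp [Complex.norm_exp]
  refine Or.inl ?_
  norm_cast


section phi
variable {l : ℝ} (hl : 0 < l)
include hl
set_option linter.unusedSectionVars false

lemma phiSq_pos (y : E2) : 0 < phiSq l y := by
  unfold phiSq
  have := Real.pi_pos
  positivity

lemma phiSq_cont : Continuous (phiSq l) := by
  unfold phiSq
  fun_prop

lemma phiSq_le (y : E2) : phiSq l y ≤ (2 * π * l ^ 2)⁻¹ := by
  unfold phiSq
  have h1 : Real.exp (-‖y‖ ^ 2 / (2 * l ^ 2)) ≤ 1 := by
    rw [Real.exp_le_one_iff]
    have : (0:ℝ) < 2 * l ^ 2 := by positivity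
    apply div_nonpos_of_nonpos_of_nonneg
    · simpa using sq_nonneg ‖y‖
    · positivity
  have h2 : (0:ℝ) < (2 * π * l ^ 2)⁻¹ := by have := Real.pi_pos; positivity
  calc (2 * π * l ^ 2)⁻¹ * Real.exp (-‖y‖ ^ 2 / (2 * l ^ 2)) ≤ (2 * π * l ^ 2)⁻¹ * 1 :=
        mul_le_mul_of_nonneg_left h1 h2.le
    _ = (2 * π * l ^ 2)⁻¹ := mul_one _

lemma phiSq_int : Integrable (phiSq l) := by
  have hb : (0:ℝ) < (2 * l ^ 2)⁻¹ := by positivity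
  have h1 := (gauss_int hb).const_mul ((2 * π * l ^ 2)⁻¹)
  refine h1.congr (Eventually.of_forall fun v => ?_)
  have h2 : -(2 * l ^ 2)⁻¹ * ‖v‖ ^ 2 = -‖v‖ ^ 2 / (2 * l ^ 2) := by
    field_simp
  simp only [phiSq]
  rw [h2]

end phi

section conv
variable {l : ℝ} (hl : 0 < l) {U : E2 → ℝ} (hUpos : ∀ x, 0 < U x)
  (hUmeas : Measurable U) (hUint : Integrable U)
include hl hUpos hUmeas hUint
set_option linter.unusedSectionVars false

lemma conv_integrand_int (x : E2) : Integrable (fun y => phiSq l y * U (x - y)) := by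
  refine (hUint.comp_sub_left x).bdd_mul (phiSq_cont hl).aestronglyMeasurable
    (c := (2 * π * l ^ 2)⁻¹) (Eventually.of_forall fun y => ?_)
  rw [Real.norm_eq_abs, abs_of_pos (phiSq_pos hl y)]
  exact phiSq_le hl y

lemma conv_pos (x : E2) : 0 < gaussConv l U x := by
  rw [gaussConv, integral_pos_iff_support_of_nonneg]
  · have hs : Function.support (fun y => phiSq l y * U (x - y)) = Set.univ := by
      ext y
      simp only [Function.mem_support, Set.mem_univ, iff_true]
      exact (mul_pos (phiSq_pos hl y) (hUpos (x - y))).ne'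
    rw [hs]
    exact isOpen_univ.measure_pos volume ⟨0, trivial⟩
  · exact fun y => (mul_pos (phiSq_pos hl y) (hUpos (x - y))).le
  · exact conv_integrand_int hl hUpos hUmeas hUint x

end conv

section main
variable {F : ℝ → ℝ}
    (hFpos : ∀ t > 0, 0 < F t)
    (hFcont : ContinuousOn F (Set.Ioi 0))
    (hFmono : StrictMonoOn F (Set.Ioi 0))
    (hFtop : Tendsto F atTop atTop)
    (hFslow : ∀ c > 0, Tendsto (fun t : ℝ => F (c * t) / F t) atTop (nhds 1))
    (hFsub : Tendsto (fun t : ℝ => F t / Real.sqrt (Real.log t)) atTop atTop)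
    {U : E2 → ℝ}
    (hUpos : ∀ x, 0 < U x)
    (hUmeas : Measurable U)
    (hUint : Integrable U)
    (hUdecay : Tendsto (fun x : E2 => F (1 / U x) / ‖x‖)
      (comap (fun x : E2 => ‖x‖) atTop) (nhds 1))
    {l : ℝ} (hl : 0 < l)
include hFpos hFcont hFmono hFtop hFslow hFsub hUpos hUmeas hUint hUdecay hl
set_option linter.unusedSectionVars false

set_option maxHeartbeats 1000000 in
lemma claim_up : ∀ c > 1, ∀ᶠ x in comap (fun x : E2 => ‖x‖) atTop,
    F (1 / gaussConv l U x) ≤ c * ‖x‖ := by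
  intro c hc
  set ε := min ((c - 1) / 7) 1 with hεdef
  have hε : 0 < ε := lt_min (by linarith) one_pos
  have hε1 : ε ≤ 1 := min_le_right _ _
  have hεc : (1 + ε) ^ 3 ≤ c := by
    have h7 : ε ≤ (c - 1) / 7 := min_le_left _ _
    have e2 : ε ^ 2 ≤ ε := by nlinarith
    have e3 : ε ^ 3 ≤ ε := by nlinarith
    nlinarith [h7, e2, e3]
  obtain ⟨R₀', hR₀'⟩ := ev_norm_iff.mp (Metric.tendsto_nhds.mp hUdecay ε hε)
  set R₀ := max R₀' 1 with hR₀def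
  have hUup : ∀ z : E2, R₀ ≤ ‖z‖ → F (1 / U z) ≤ (1 + ε) * ‖z‖ := by
    intro z hz
    have h1 := hR₀' z ((le_max_left _ _).trans hz)
    have hz1 : (0:ℝ) < ‖z‖ := lt_of_lt_of_le one_pos ((le_max_right _ _).trans hz)
    rw [Real.dist_eq, abs_sub_lt_iff] at h1
    have h2 : F (1 / U z) / ‖z‖ < 1 + ε := by linarith [h1.1]
    calc F (1 / U z) = F (1 / U z) / ‖z‖ * ‖z‖ := by field_simp
      _ ≤ (1 + ε) * ‖z‖ := mul_le_mul_of_nonneg_right h2.le hz1.le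
  have hπ := Real.pi_pos
  set m := (2 * π * l ^ 2)⁻¹ * Real.exp (-(1:ℝ) / (2 * l ^ 2)) with hmdef
  have hmpos : 0 < m := by positivity
  have hmle : ∀ y : E2, ‖y‖ ≤ 1 → m ≤ phiSq l y := by
    intro y hy
    rw [hmdef, phiSq]
    refine mul_le_mul_of_nonneg_left (Real.exp_le_exp.mpr ?_) (by positivity)
    have hy2 : ‖y‖ ^ 2 ≤ 1 := by nlinarith [norm_nonneg y]
    gcongr
    all_goals first
      | positivity
      | linarith
  set vB := (volume (Metric.closedBall (0:E2) 1)).toReal with hvBdef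
  have hvBpos : 0 < vB := by
    refine ENNReal.toReal_pos ?_ measure_closedBall_lt_top.ne
    refine (lt_of_lt_of_le (Metric.measure_ball_pos volume 0 one_pos)
      (measure_mono Metric.ball_subset_closedBall)).ne'
  set c₁ := m * vB with hc₁def
  have hc₁ : 0 < c₁ := mul_pos hmpos hvBpos
  have hsv := G_slow hFcont hFmono hFtop hFslow (c := 1 / c₁) (by positivity)
  have hsv' : ∀ᶠ s in atTop, F (1 / c₁ * Ginv F s) ≤ (1 + ε) * s := by
    filter_upwards [Metric.tendsto_nhds.mp hsv ε hε, eventually_gt_atTop 0] with s hs hspos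
    rw [Real.dist_eq, abs_sub_lt_iff] at hs
    have h2 : F (1 / c₁ * Ginv F s) / s < 1 + ε := by linarith [hs.1]
    calc F (1 / c₁ * Ginv F s) = F (1 / c₁ * Ginv F s) / s * s := by field_simp
      _ ≤ (1 + ε) * s := mul_le_mul_of_nonneg_right h2.le hspos.le
  obtain ⟨S₁, hS₁⟩ := eventually_atTop.mp hsv'
  refine ev_norm_iff.mpr ⟨(R₀ + 1) ⊔ (1 / ε) ⊔ F 2 ⊔ S₁ ⊔ 1, fun x hx => ?_⟩
  have hxR : R₀ + 1 ≤ ‖x‖ := le_trans (by simp [le_sup_iff]) hx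
  have hxe : 1 / ε ≤ ‖x‖ := le_trans (by simp [le_sup_iff]) hx
  have hxF2 : F 2 ≤ ‖x‖ := le_trans (by simp [le_sup_iff]) hx
  have hxS : S₁ ≤ ‖x‖ := le_trans (by simp [le_sup_iff]) hx
  have hx1 : 1 ≤ ‖x‖ := le_trans (by simp [le_sup_iff]) hx
  set s := (1 + ε) * (‖x‖ + 1) with hsdef
  have hs_ge : ‖x‖ ≤ s := by nlinarith [norm_nonneg x]
  have hsF2 : F 2 ≤ s := hxF2.trans hs_ge
  have hGpos := G_pos hFcont hFmono hFtop hsF2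
  have hkey : ∀ y ∈ Metric.closedBall (0:E2) 1,
      m * (1 / Ginv F s) ≤ phiSq l y * U (x - y) := by
    intro y hy
    rw [Metric.mem_closedBall, dist_zero_right] at hy
    have hz : R₀ ≤ ‖x - y‖ := by
      have h3 := norm_sub_norm_le x y
      linarith
    have hzle : ‖x - y‖ ≤ ‖x‖ + 1 := by
      have h3 := norm_sub_le x y
      linarith
    have h1 : F (1 / U (x - y)) ≤ s := by
      calc F (1 / U (x - y)) ≤ (1 + ε) * ‖x - y‖ := hUup _ hz
        _ ≤ (1 + ε) * (‖x‖ + 1) := mul_le_mul_of_nonneg_left hzle (by linarith)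
    have h2 : 1 / U (x - y) ≤ Ginv F s :=
      le_G hFcont hFmono hFtop (one_div_pos.2 (hUpos _)) hsF2 h1
    have h3 : 1 / Ginv F s ≤ U (x - y) := (one_div_le hGpos (hUpos _)).mpr h2
    exact mul_le_mul (hmle y hy) h3 (by positivity) (phiSq_pos hl y).le
  have hInt := conv_integrand_int hl hUpos hUmeas hUint x
  have hVlow : c₁ * (1 / Ginv F s) ≤ gaussConv l U x := by
    have h1 := setIntegral_ge_of_const_le measurableSet_closedBall
      measure_closedBall_lt_top.ne hkey hInt.integrableOn
    have h2 : (∫ y in Metric.closedBall (0:E2) 1, phiSq l y * U (x - y))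
        ≤ ∫ y : E2, phiSq l y * U (x - y) :=
      setIntegral_le_integral hInt (Eventually.of_forall fun y =>
        (mul_pos (phiSq_pos hl y) (hUpos (x - y))).le)
    rw [gaussConv]
    calc c₁ * (1 / Ginv F s) = m * (1 / Ginv F s) * vB := by rw [hc₁def]; ring
      _ ≤ _ := le_trans ((mul_comm _ _).trans_le h1) h2
  have hVpos := conv_pos hl hUpos hUmeas hUint x
  have h1V : 1 / gaussConv l U x ≤ 1 / c₁ * Ginv F s := by
    have hpos2 : 0 < c₁ * (1 / Ginv F s) := by positivity
    have h4 := one_div_le_one_div_of_le hpos2 hVlow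
    have heq : 1 / (c₁ * (1 / Ginv F s)) = 1 / c₁ * Ginv F s := by
      field_simp
    rw [heq] at h4
    exact h4
  have hF1 : F (1 / gaussConv l U x) ≤ F (1 / c₁ * Ginv F s) :=
    hFmono.monotoneOn (Set.mem_Ioi.2 (one_div_pos.2 hVpos))
      (Set.mem_Ioi.2 (by positivity)) h1V
  have hF2 : F (1 / c₁ * Ginv F s) ≤ (1 + ε) * s := hS₁ s (hxS.trans hs_ge)
  have hxe' : ‖x‖ + 1 ≤ (1 + ε) * ‖x‖ := by
    have h5 : 1 ≤ ‖x‖ * ε := (div_le_iff₀ hε).mp hxe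
    nlinarith
  calc F (1 / gaussConv l U x) ≤ (1 + ε) * ((1 + ε) * (‖x‖ + 1)) := le_trans hF1 hF2
    _ ≤ (1 + ε) * ((1 + ε) * ((1 + ε) * ‖x‖)) := by
        have h6 : (0:ℝ) ≤ 1 + ε := by linarith
        exact mul_le_mul_of_nonneg_left (mul_le_mul_of_nonneg_left hxe' h6) h6
    _ = (1 + ε) ^ 3 * ‖x‖ := by ring
    _ ≤ c * ‖x‖ := mul_le_mul_of_nonneg_right hεc (norm_nonneg x)

set_option maxHeartbeats 1000000 in
lemma claim_lo : ∀ c, 0 < c → c < 1 → ∀ᶠ x in comap (fun x : E2 => ‖x‖) atTop,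
    c * ‖x‖ ≤ F (1 / gaussConv l U x) := by
  intro c hc0 hc1
  set ε := (1 - c) / 3 with hεdef
  have hε : 0 < ε := by rw [hεdef]; linarith
  have hε1 : ε < 1 / 3 := by rw [hεdef]; linarith
  have h1ε : 0 < 1 - ε := by linarith
  set c₂ := (1 - ε) ^ 2 with hc₂def
  have hc₂ : 0 < c₂ := by positivity
  have hεc : c ≤ (1 - ε) * c₂ := by
    have hc' : c = 1 - 3 * ε := by rw [hεdef]; ring
    rw [hc₂def, hc']
    nlinarith [sq_nonneg ε, hε.le]
  obtain ⟨R₁', hR₁'⟩ := ev_norm_iff.mp (Metric.tendsto_nhds.mp hUdecay ε hε)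
  set R₁ := max R₁' 1 with hR₁def
  have hUlo : ∀ z : E2, R₁ ≤ ‖z‖ → (1 - ε) * ‖z‖ ≤ F (1 / U z) := by
    intro z hz
    have h1 := hR₁' z ((le_max_left _ _).trans hz)
    have hz1 : (0:ℝ) < ‖z‖ := lt_of_lt_of_le one_pos ((le_max_right _ _).trans hz)
    rw [Real.dist_eq, abs_sub_lt_iff] at h1
    have h2 : 1 - ε < F (1 / U z) / ‖z‖ := by linarith [h1.2]
    calc (1 - ε) * ‖z‖ ≤ F (1 / U z) / ‖z‖ * ‖z‖ := mul_le_mul_of_nonneg_right h2.le hz1.le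
      _ = F (1 / U z) := by field_simp
  have hπ := Real.pi_pos
  set Cφ := (2 * π * l ^ 2)⁻¹ with hCφdef
  have hCφ : 0 < Cφ := by positivity
  set A := ∫ y : E2, phiSq l y with hAdef
  have hA : 0 ≤ A := integral_nonneg fun y => (phiSq_pos hl y).le
  set IU := ∫ y : E2, U y with hIUdef
  have hIU : 0 ≤ IU := integral_nonneg fun y => (hUpos y).le
  set C₃ := A + Cφ * IU + 1 with hC₃def
  have hC₃ : 0 < C₃ := by positivity
  set b := ε ^ 2 / (2 * l ^ 2) with hbdef
  have hb : 0 < b := by positivity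
  obtain ⟨S₂, hS₂⟩ := eventually_atTop.mp
    (G_subgauss hFcont hFmono hFtop hFsub (b := b / c₂ ^ 2) (by positivity))
  have hsv := G_slow hFcont hFmono hFtop hFslow (c := 1 / C₃) (by positivity)
  have hsv' : ∀ᶠ s in atTop, (1 - ε) * s ≤ F (1 / C₃ * Ginv F s) := by
    filter_upwards [Metric.tendsto_nhds.mp hsv ε hε, eventually_gt_atTop 0] with s hs hspos
    rw [Real.dist_eq, abs_sub_lt_iff] at hs
    have h2 : 1 - ε < F (1 / C₃ * Ginv F s) / s := by linarith [hs.2]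
    calc (1 - ε) * s ≤ F (1 / C₃ * Ginv F s) / s * s := mul_le_mul_of_nonneg_right h2.le hspos.le
      _ = F (1 / C₃ * Ginv F s) := by field_simp
  obtain ⟨S₃, hS₃⟩ := eventually_atTop.mp hsv'
  refine ev_norm_iff.mpr ⟨(R₁ / (1 - ε)) ⊔ (F 2 / c₂) ⊔ (S₂ / c₂) ⊔ (S₃ / c₂) ⊔ 1,
    fun x hx => ?_⟩
  have hx1 : 1 ≤ ‖x‖ := le_trans (by simp [le_sup_iff]) hx
  have hxpos : (0:ℝ) < ‖x‖ := lt_of_lt_of_le one_pos hx1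
  have hxR : R₁ / (1 - ε) ≤ ‖x‖ := le_trans (by simp [le_sup_iff]) hx
  have hxF2 : F 2 / c₂ ≤ ‖x‖ := le_trans (by simp [le_sup_iff]) hx
  have hxS2 : S₂ / c₂ ≤ ‖x‖ := le_trans (by simp [le_sup_iff]) hx
  have hxS3 : S₃ / c₂ ≤ ‖x‖ := le_trans (by simp [le_sup_iff]) hx
  set s₀ := c₂ * ‖x‖ with hs₀def
  have hs₀F2 : F 2 ≤ s₀ := by
    rw [div_le_iff₀ hc₂] at hxF2
    rw [hs₀def]; linarith
  have hs₀S2 : S₂ ≤ s₀ := by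
    rw [div_le_iff₀ hc₂] at hxS2
    rw [hs₀def]; linarith
  have hs₀S3 : S₃ ≤ s₀ := by
    rw [div_le_iff₀ hc₂] at hxS3
    rw [hs₀def]; linarith
  have hxR1 : R₁ ≤ (1 - ε) * ‖x‖ := by
    rw [div_le_iff₀ h1ε] at hxR
    linarith
  have hGpos := G_pos hFcont hFmono hFtop hs₀F2
  have hInt := conv_integrand_int hl hUpos hUmeas hUint x
  set B := Metric.ball (0:E2) (ε * ‖x‖) with hBdef
  have hkey : ∀ y ∈ B, phiSq l y * U (x - y) ≤ phiSq l y * (1 / Ginv F s₀) := by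
    intro y hy
    rw [hBdef, Metric.mem_ball, dist_zero_right] at hy
    have hz : (1 - ε) * ‖x‖ ≤ ‖x - y‖ := by
      have h3 := norm_sub_norm_le x y
      nlinarith
    have h1 : s₀ ≤ F (1 / U (x - y)) := by
      calc s₀ = (1 - ε) * ((1 - ε) * ‖x‖) := by rw [hs₀def, hc₂def]; ring
        _ ≤ (1 - ε) * ‖x - y‖ := mul_le_mul_of_nonneg_left hz h1ε.le
        _ ≤ F (1 / U (x - y)) := hUlo _ (hxR1.trans hz)
    have h2 : Ginv F s₀ ≤ 1 / U (x - y) :=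
      G_le hFcont hFmono hFtop (one_div_pos.2 (hUpos _)) hs₀F2 h1
    have h3 : U (x - y) ≤ 1 / Ginv F s₀ := (le_one_div (hUpos _) hGpos).mpr h2
    exact mul_le_mul_of_nonneg_left h3 (phiSq_pos hl y).le
  have hI1 : (∫ y in B, phiSq l y * U (x - y)) ≤ A * (1 / Ginv F s₀) := by
    have h1 : (∫ y in B, phiSq l y * U (x - y))
        ≤ ∫ y in B, phiSq l y * (1 / Ginv F s₀) :=
      setIntegral_mono_on hInt.integrableOn ((phiSq_int hl).mul_const _).integrableOn
        Metric.isOpen_ball.measurableSet hkey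
    have h2 : (∫ y in B, phiSq l y * (1 / Ginv F s₀))
        ≤ ∫ y : E2, phiSq l y * (1 / Ginv F s₀) :=
      setIntegral_le_integral ((phiSq_int hl).mul_const _)
        (Eventually.of_forall fun y =>
          mul_nonneg (phiSq_pos hl y).le (one_div_pos.2 hGpos).le)
    have h3 : (∫ y : E2, phiSq l y * (1 / Ginv F s₀)) = A * (1 / Ginv F s₀) :=
      integral_mul_const _ _
    linarith
  have hexp : Real.exp (-(b * ‖x‖ ^ 2)) ≤ 1 / Ginv F s₀ := by
    have h1 : Ginv F s₀ ≤ Real.exp (b / c₂ ^ 2 * s₀ ^ 2) := hS₂ s₀ hs₀S2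
    have h2 : b / c₂ ^ 2 * s₀ ^ 2 = b * ‖x‖ ^ 2 := by
      rw [hs₀def]
      field_simp
    rw [h2] at h1
    rw [Real.exp_neg]
    rw [one_div]
    exact inv_anti₀ hGpos h1
  have hI2 : (∫ y in Bᶜ, phiSq l y * U (x - y)) ≤ Cφ * IU * (1 / Ginv F s₀) := by
    have hkey2 : ∀ y ∈ Bᶜ, phiSq l y * U (x - y)
        ≤ (Cφ * Real.exp (-(b * ‖x‖ ^ 2))) * U (x - y) := by
      intro y hy
      rw [hBdef, Set.mem_compl_iff, Metric.mem_ball, dist_zero_right, not_lt] at hy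
      have h1 : phiSq l y ≤ Cφ * Real.exp (-(b * ‖x‖ ^ 2)) := by
        rw [phiSq, hCφdef]
        refine mul_le_mul_of_nonneg_left (Real.exp_le_exp.mpr ?_) (by positivity)
        have h5 : (ε * ‖x‖) ^ 2 ≤ ‖y‖ ^ 2 := pow_le_pow_left₀ (by positivity) hy 2
        have h6 : -(b * ‖x‖ ^ 2) = -(ε * ‖x‖) ^ 2 / (2 * l ^ 2) := by
          rw [hbdef]; ring
        rw [h6]
        gcongr
        all_goals first
          | positivity
          | linarith
      exact mul_le_mul_of_nonneg_right h1 (hUpos _).le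
    have h1 : (∫ y in Bᶜ, phiSq l y * U (x - y))
        ≤ ∫ y in Bᶜ, (Cφ * Real.exp (-(b * ‖x‖ ^ 2))) * U (x - y) :=
      setIntegral_mono_on hInt.integrableOn
        (((hUint.comp_sub_left x).const_mul _).integrableOn)
        Metric.isOpen_ball.measurableSet.compl hkey2
    have h2 : (∫ y in Bᶜ, (Cφ * Real.exp (-(b * ‖x‖ ^ 2))) * U (x - y))
        ≤ ∫ y : E2, (Cφ * Real.exp (-(b * ‖x‖ ^ 2))) * U (x - y) :=
      setIntegral_le_integral ((hUint.comp_sub_left x).const_mul _)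
        (Eventually.of_forall fun y =>
          mul_nonneg (mul_nonneg hCφ.le (Real.exp_nonneg _)) (hUpos _).le)
    have h3 : (∫ y : E2, (Cφ * Real.exp (-(b * ‖x‖ ^ 2))) * U (x - y))
        = (Cφ * Real.exp (-(b * ‖x‖ ^ 2))) * IU := by
      rw [integral_const_mul, integral_sub_left_eq_self U volume x]
    have h4 : (Cφ * Real.exp (-(b * ‖x‖ ^ 2))) * IU ≤ Cφ * (1 / Ginv F s₀) * IU := by
      refine mul_le_mul_of_nonneg_right (mul_le_mul_of_nonneg_left hexp hCφ.le) hIU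
    calc (∫ y in Bᶜ, phiSq l y * U (x - y)) ≤ (Cφ * Real.exp (-(b * ‖x‖ ^ 2))) * IU :=
          le_trans h1 (le_trans h2 (le_of_eq h3))
      _ ≤ Cφ * (1 / Ginv F s₀) * IU := h4
      _ = Cφ * IU * (1 / Ginv F s₀) := by ring
  have hVle : gaussConv l U x ≤ C₃ * (1 / Ginv F s₀) := by
    rw [gaussConv, ← integral_add_compl Metric.isOpen_ball.measurableSet hInt]
    have hG1 : 0 < 1 / Ginv F s₀ := by positivity
    calc (∫ y in B, phiSq l y * U (x - y)) + ∫ y in Bᶜ, phiSq l y * U (x - y)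
        ≤ A * (1 / Ginv F s₀) + Cφ * IU * (1 / Ginv F s₀) := add_le_add hI1 hI2
      _ = (A + Cφ * IU) * (1 / Ginv F s₀) := by ring
      _ ≤ C₃ * (1 / Ginv F s₀) := by
          refine mul_le_mul_of_nonneg_right ?_ hG1.le
          rw [hC₃def]; linarith
  have hVpos := conv_pos hl hUpos hUmeas hUint x
  have h1V : 1 / C₃ * Ginv F s₀ ≤ 1 / gaussConv l U x := by
    have h4 := one_div_le_one_div_of_le hVpos hVle
    have heq : 1 / (C₃ * (1 / Ginv F s₀)) = 1 / C₃ * Ginv F s₀ := by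
      field_simp
    rw [heq] at h4
    exact h4
  have hF1 : F (1 / C₃ * Ginv F s₀) ≤ F (1 / gaussConv l U x) :=
    hFmono.monotoneOn (Set.mem_Ioi.2 (by positivity))
      (Set.mem_Ioi.2 (one_div_pos.2 hVpos)) h1V
  have hF2 : (1 - ε) * s₀ ≤ F (1 / C₃ * Ginv F s₀) := hS₃ s₀ hs₀S3
  calc c * ‖x‖ ≤ (1 - ε) * c₂ * ‖x‖ := mul_le_mul_of_nonneg_right hεc (norm_nonneg x)
    _ = (1 - ε) * s₀ := by rw [hs₀def]; ring
    _ ≤ F (1 / gaussConv l U x) := le_trans hF2 hF1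

end main

/-- Boundary case `α = ∞`: if `U` is integrable with sub-Gaussian, regular `(F,∞)`-decay
(`F` slowly varying), then `|φ₀|² * U` has the same decay. -/
theorem stmt_6
    (F : ℝ → ℝ)
    (hFpos : ∀ t > 0, 0 < F t)
    (hFcont : ContinuousOn F (Set.Ioi 0))
    (hFmono : StrictMonoOn F (Set.Ioi 0))
    (hFtop : Tendsto F atTop atTop)
    (hFslow : ∀ c > 0, Tendsto (fun t : ℝ => F (c * t) / F t) atTop (nhds 1))
    (hFsub : Tendsto (fun t : ℝ => F t / Real.sqrt (Real.log t)) atTop atTop)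
    (U : E2 → ℝ)
    (hUpos : ∀ x, 0 < U x)
    (hUmeas : Measurable U)
    (hUint : Integrable U)
    (hUdecay : Tendsto (fun x : E2 => F (1 / U x) / ‖x‖)
      (comap (fun x : E2 => ‖x‖) atTop) (nhds 1))
    (l : ℝ) (hl : 0 < l) :
    Tendsto (fun x : E2 => F (1 / gaussConv l U x) / ‖x‖)
      (comap (fun x : E2 => ‖x‖) atTop) (nhds 1) := by
  rw [Metric.tendsto_nhds]
  intro ε hε
  set ε' := min ε 1 with hε'def
  have hε' : 0 < ε' := lt_min hε one_pos
  have hε'1 : ε' ≤ 1 := min_le_right _ _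
  have hε'ε : ε' ≤ ε := min_le_left _ _
  have hup := claim_up hFpos hFcont hFmono hFtop hFslow hFsub hUpos hUmeas hUint hUdecay hl
    (1 + ε' / 2) (by linarith)
  have hlo := claim_lo hFpos hFcont hFmono hFtop hFslow hFsub hUpos hUmeas hUint hUdecay hl
    (1 - ε' / 2) (by linarith) (by linarith)
  filter_upwards [hup, hlo, ev_norm_iff.mpr ⟨1, fun x hx => hx⟩] with x h1 h2 hx1
  have hxpos : (0:ℝ) < ‖x‖ := lt_of_lt_of_le one_pos hx1
  rw [Real.dist_eq, abs_sub_lt_iff]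
  have hd1 : F (1 / gaussConv l U x) / ‖x‖ ≤ 1 + ε' / 2 := (div_le_iff₀ hxpos).mpr h1
  have hd2 : 1 - ε' / 2 ≤ F (1 / gaussConv l U x) / ‖x‖ := (le_div_iff₀ hxpos).mpr h2
  constructor
  · linarith
  · linarith
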